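/- For every nonnegative integer k and integer n with n/2 an integer: Σ_{ℓ=0}^{k} C(k,ℓ)(−1)^{⌊(n−ℓ)/2⌋ + ⌊(k−ℓ+1)/2⌋ + ℓ(k−ℓ)} = (−1)^{n/2 + ⌊(k+1)/2⌋} 2^k, and Σ_{ℓ=0}^{k} C(k,ℓ)(−1)^{⌊(n−ℓ)/2⌋ + ⌊(k−ℓ+1)/2⌋ + ℓ(k−ℓ) + ℓ} = (−1)^{n/2} if k = 0 and 0 if k > 0. -/
import Mathlib

lemma stmt15_key (n k ℓ : ℕ) (hn : Even n) (hk : k ≤ n) (hl : ℓ ≤ k) :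
    (-1 : ℤ) ^ ((n - ℓ) / 2 + (k - ℓ + 1) / 2 + ℓ * (k - ℓ))
      = (-1 : ℤ) ^ (n / 2 + (k + 1) / 2) := by
  have hpar : ((n - ℓ) / 2 + (k - ℓ + 1) / 2 + ℓ * (k - ℓ)
      + (n / 2 + (k + 1) / 2)) % 2 = 0 := by
    obtain ⟨m, hm⟩ := hn
    have h3 : ℓ * (k - ℓ) % 2 = (ℓ % 2) * ((k - ℓ) % 2) % 2 := Nat.mul_mod _ _ _
    have h1 := Nat.mod_two_eq_zero_or_one ℓ
    have h2 := Nat.mod_two_eq_zero_or_one (k - ℓ)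
    rcases h1 with h1 | h1 <;> rcases h2 with h2 | h2 <;>
      rw [h1, h2] at h3 <;> norm_num at h3 <;>
      generalize hg : ℓ * (k - ℓ) = p at h3 ⊢ <;> omega
  have hb : ((-1 : ℤ) ^ (n / 2 + (k + 1) / 2)) * (-1) ^ (n / 2 + (k + 1) / 2) = 1 := by
    rw [← pow_add]; exact Even.neg_one_pow ⟨_, rfl⟩
  have ha : ((-1 : ℤ) ^ ((n - ℓ) / 2 + (k - ℓ + 1) / 2 + ℓ * (k - ℓ)))
      * (-1) ^ (n / 2 + (k + 1) / 2) = 1 := by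
    rw [← pow_add]; exact Even.neg_one_pow (Nat.even_iff.mpr hpar)
  have hne : ((-1 : ℤ) ^ (n / 2 + (k + 1) / 2)) ≠ 0 := by
    exact pow_ne_zero _ (by norm_num)
  exact mul_right_cancel₀ hne (ha.trans hb.symm)

/-- Sign identities used in computing the Higman trace `τ(e_K)` in the doubled
Nichols Hopf algebra: for even `n` and `0 ≤ k ≤ n`,
`Σ_ℓ C(k,ℓ)(-1)^{⌊(n-ℓ)/2⌋+⌊(k-ℓ+1)/2⌋+ℓ(k-ℓ)} = (-1)^{n/2+⌊(k+1)/2⌋} 2^k` and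
`Σ_ℓ C(k,ℓ)(-1)^{⌊(n-ℓ)/2⌋+⌊(k-ℓ+1)/2⌋+ℓ(k-ℓ)+ℓ} = (-1)^{n/2} δ_{k=0}`. -/
theorem stmt15 (n k : ℕ) (hn : Even n) (hk : k ≤ n) :
    (∑ ℓ ∈ Finset.range (k + 1),
        (Nat.choose k ℓ : ℤ) *
          (-1 : ℤ) ^ ((n - ℓ) / 2 + (k - ℓ + 1) / 2 + ℓ * (k - ℓ)))
      = (-1 : ℤ) ^ (n / 2 + (k + 1) / 2) * 2 ^ k ∧
    (∑ ℓ ∈ Finset.range (k + 1),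
        (Nat.choose k ℓ : ℤ) *
          (-1 : ℤ) ^ ((n - ℓ) / 2 + (k - ℓ + 1) / 2 + ℓ * (k - ℓ) + ℓ))
      = if k = 0 then (-1 : ℤ) ^ (n / 2) else 0 := by
  constructor
  · have h1 : ∀ ℓ ∈ Finset.range (k + 1),
        (Nat.choose k ℓ : ℤ) *
          (-1 : ℤ) ^ ((n - ℓ) / 2 + (k - ℓ + 1) / 2 + ℓ * (k - ℓ))
        = (-1 : ℤ) ^ (n / 2 + (k + 1) / 2) * (Nat.choose k ℓ : ℤ) := by
      intro ℓ hl
      rw [stmt15_key n k ℓ hn hk (by simpa using Nat.lt_succ_iff.mp (Finset.mem_range.mp hl))]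
      ring
    rw [Finset.sum_congr rfl h1, ← Finset.mul_sum, ← Nat.cast_sum,
      Nat.sum_range_choose]
    push_cast
    ring
  · have h1 : ∀ ℓ ∈ Finset.range (k + 1),
        (Nat.choose k ℓ : ℤ) *
          (-1 : ℤ) ^ ((n - ℓ) / 2 + (k - ℓ + 1) / 2 + ℓ * (k - ℓ) + ℓ)
        = (-1 : ℤ) ^ (n / 2 + (k + 1) / 2) * ((-1) ^ ℓ * (Nat.choose k ℓ : ℤ)) := by
      intro ℓ hl
      rw [pow_add, stmt15_key n k ℓ hn hk (by simpa using Nat.lt_succ_iff.mp (Finset.mem_range.mp hl))]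
      ring
    rw [Finset.sum_congr rfl h1, ← Finset.mul_sum,
      Int.alternating_sum_range_choose]
    by_cases hk0 : k = 0 <;> simp [hk0]
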